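/- Let n ≥ 0, let a < b be reals, and let γ : [a,b] → ℝ^{n+1} be a curve with totally positive torsion. Then for all points a < x₁ < x₂ < … < x_{n+1} < b one has det(γ′(x₁), γ′(x₂), …, γ′(x_{n+1})) > 0, where the determinant is that of the (n+1)×(n+1) matrix whose columns are the listed derivative vectors. -/

import Mathlib

noncomputable section

open Set

/-- A curve `γ : [a,b] → ℝ^d` has *totally positive torsion* if it is continuous on `[a,b]`,
`d`-times continuously differentiable on `(a,b)`, and for every `t ∈ (a,b)` all `d` leading
principal minors of the `d × d` matrix whose columns are `γ'(t), γ''(t), …, γ^{(d)}(t)`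
are positive. -/
def HasTotallyPositiveTorsion (d : ℕ) (a b : ℝ) (γ : ℝ → Fin d → ℝ) : Prop :=
  ContinuousOn γ (Set.Icc a b) ∧
  ContDiffOn ℝ d γ (Set.Ioo a b) ∧
  ∀ t ∈ Set.Ioo a b, ∀ (k : ℕ) (hk : k ≤ d), 1 ≤ k →
    0 < (Matrix.of (fun i j : Fin k =>
      iteratedDerivWithin (j.1 + 1) γ (Set.Ioo a b) t (Fin.castLE hk i))).det

open MeasureTheory in


theorem my_leibniz {s : Set ℝ} (hs : UniqueDiffOn ℝ s) (f g : ℝ → ℝ) :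
    ∀ (n : ℕ), ContDiffOn ℝ n f s → ContDiffOn ℝ n g s → ∀ t ∈ s,
      iteratedDerivWithin n (fun y => f y * g y) s t
        = ∑ r ∈ Finset.range (n + 1),
            (n.choose r : ℝ) * (iteratedDerivWithin r f s t * iteratedDerivWithin (n - r) g s t) := by
  intro n
  induction n with
  | zero => intro _ _ t ht; simp
  | succ n IH =>
    intro hf hg t ht
    have hfn : ContDiffOn ℝ n f s := hf.of_le (by exact_mod_cast Nat.le_succ n)
    have hgn : ContDiffOn ℝ n g s := hg.of_le (by exact_mod_cast Nat.le_succ n)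
    have hdf : ∀ r : ℕ, r ≤ n → ∀ y ∈ s, HasDerivWithinAt (iteratedDerivWithin r f s)
        (iteratedDerivWithin (r+1) f s y) s y := by
      intro r hr y hy
      have := ((hf.differentiableOn_iteratedDerivWithin
        (by exact_mod_cast Nat.lt_succ_of_le hr) hs) y hy).hasDerivWithinAt
      rwa [← iteratedDerivWithin_succ] at this
    have hdg : ∀ r : ℕ, r ≤ n → ∀ y ∈ s, HasDerivWithinAt (iteratedDerivWithin r g s)
        (iteratedDerivWithin (r+1) g s y) s y := by
      intro r hr y hy
      have := ((hg.differentiableOn_iteratedDerivWithin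
        (by exact_mod_cast Nat.lt_succ_of_le hr) hs) y hy).hasDerivWithinAt
      rwa [← iteratedDerivWithin_succ] at this
    have hsum : HasDerivWithinAt
        (fun y => ∑ r ∈ Finset.range (n + 1),
          (n.choose r : ℝ) * (iteratedDerivWithin r f s y * iteratedDerivWithin (n - r) g s y))
        (∑ r ∈ Finset.range (n + 1), (n.choose r : ℝ) *
          (iteratedDerivWithin (r+1) f s t * iteratedDerivWithin (n - r) g s t
            + iteratedDerivWithin r f s t * iteratedDerivWithin (n - r + 1) g s t)) s t := by
      refine HasDerivWithinAt.fun_sum (fun r hr => ?_)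
      have hr' : r ≤ n := by simpa using Nat.lt_succ_iff.mp (Finset.mem_range.mp hr)
      exact ((hdf r hr' t ht).mul (hdg (n-r) (Nat.sub_le n r) t ht)).const_mul _
    have h1 : iteratedDerivWithin (n+1) (fun y => f y * g y) s t
        = derivWithin (iteratedDerivWithin n (fun y => f y * g y) s) s t :=
      congrFun iteratedDerivWithin_succ t
    rw [h1, derivWithin_congr (fun y hy => IH hfn hgn y hy) (IH hfn hgn t ht),
      hsum.derivWithin (hs t ht)]
    -- now pure algebra
    have key : ∀ (A B : ℕ → ℝ),
        ∑ r ∈ Finset.range (n + 1), (n.choose r : ℝ) *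
          (A (r+1) * B (n - r) + A r * B (n - r + 1))
        = ∑ r ∈ Finset.range (n + 2), ((n+1).choose r : ℝ) * (A r * B (n + 1 - r)) := by
      intro A B
      have e1 : ∑ r ∈ Finset.range (n + 2), ((n+1).choose r : ℝ) * (A r * B (n + 1 - r))
          = ∑ r ∈ Finset.range (n + 1), ((n+1).choose (r+1) : ℝ) * (A (r+1) * B (n - r))
            + A 0 * B (n+1) := by
        rw [Finset.sum_range_succ']
        simp [Nat.succ_sub_succ]
      have e2 : ∀ r ∈ Finset.range (n+1), ((n+1).choose (r+1) : ℝ) * (A (r+1) * B (n - r))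
          = (n.choose r : ℝ) * (A (r+1) * B (n - r))
            + (n.choose (r+1) : ℝ) * (A (r+1) * B (n - r)) := by
        intro r _
        rw [Nat.choose_succ_succ]
        push_cast
        ring
      have e3 : ∑ r ∈ Finset.range (n + 1), (n.choose (r+1) : ℝ) * (A (r+1) * B (n - r))
            + A 0 * B (n+1)
          = ∑ r ∈ Finset.range (n + 1), (n.choose r : ℝ) * (A r * B (n - r + 1)) := by
        have : ∑ r ∈ Finset.range (n + 2), (n.choose r : ℝ) * (A r * B (n + 1 - r))
            = ∑ r ∈ Finset.range (n + 1), (n.choose (r+1) : ℝ) * (A (r+1) * B (n - r))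
              + A 0 * B (n+1) := by
          rw [Finset.sum_range_succ']
          simp [Nat.succ_sub_succ]
        rw [← this, Finset.sum_range_succ, Nat.choose_succ_self]
        simp only [Nat.cast_zero, zero_mul, add_zero]
        refine Finset.sum_congr rfl (fun r hr => ?_)
        have : n + 1 - r = n - r + 1 := by
          have := Nat.lt_succ_iff.mp (Finset.mem_range.mp hr); omega
        rw [this]
      calc ∑ r ∈ Finset.range (n + 1), (n.choose r : ℝ) *
          (A (r+1) * B (n - r) + A r * B (n - r + 1))
          = ∑ r ∈ Finset.range (n + 1), ((n.choose r : ℝ) * (A (r+1) * B (n - r))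
            + (n.choose r : ℝ) * (A r * B (n - r + 1))) := by
            refine Finset.sum_congr rfl (fun r _ => by ring)
        _ = ∑ r ∈ Finset.range (n + 1), (n.choose r : ℝ) * (A (r+1) * B (n - r))
            + ∑ r ∈ Finset.range (n + 1), (n.choose r : ℝ) * (A r * B (n - r + 1)) :=
            Finset.sum_add_distrib
        _ = ∑ r ∈ Finset.range (n + 1), (n.choose r : ℝ) * (A (r+1) * B (n - r))
            + (∑ r ∈ Finset.range (n + 1), (n.choose (r+1) : ℝ) * (A (r+1) * B (n - r))
              + A 0 * B (n+1)) := by rw [e3]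
        _ = ∑ r ∈ Finset.range (n + 1), ((n+1).choose (r+1) : ℝ) * (A (r+1) * B (n - r))
            + A 0 * B (n+1) := by
            rw [Finset.sum_congr rfl e2, Finset.sum_add_distrib]; ring
        _ = ∑ r ∈ Finset.range (n + 2), ((n+1).choose r : ℝ) * (A r * B (n + 1 - r)) := e1.symm
    exact key (fun r => iteratedDerivWithin r f s t) (fun r => iteratedDerivWithin r g s t)



theorem my_pi_iter {d : ℕ} {n : ℕ} {s : Set ℝ} (hs : UniqueDiffOn ℝ s)
    (f : ℝ → Fin d → ℝ) (hf : ContDiffOn ℝ n f s) :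
    ∀ j, j ≤ n → ∀ t ∈ s, ∀ i,
      iteratedDerivWithin j f s t i = iteratedDerivWithin j (fun y => f y i) s t := by
  intro j
  induction j with
  | zero => intro _ t ht i; simp
  | succ j IH =>
    intro hj t ht i
    have hj' : j ≤ n := Nat.le_of_succ_le hj
    have hD : DifferentiableWithinAt ℝ (iteratedDerivWithin j f s) s t :=
      (hf.differentiableOn_iteratedDerivWithin (by exact_mod_cast Nat.lt_of_succ_le hj) hs) t ht
    have hDi : ∀ i', DifferentiableWithinAt ℝ (fun y => iteratedDerivWithin j f s y i') s t :=
      fun i' => (ContinuousLinearMap.proj (R := ℝ) (φ := fun _ : Fin d => ℝ)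
        i').differentiableAt.comp_differentiableWithinAt t hD
    rw [iteratedDerivWithin_succ, derivWithin_pi hDi]
    have : derivWithin (fun y => iteratedDerivWithin j f s y i) s t
        = derivWithin (iteratedDerivWithin j (fun y => f y i) s) s t :=
      derivWithin_congr (fun y hy => IH hj' y hy i) (IH hj' t ht i)
    simp only []
    rw [show (fun x => iteratedDerivWithin j f s x i) = (fun y => iteratedDerivWithin j f s y i) from rfl, this, ← iteratedDerivWithin_succ]

open MeasureTheory in


theorem box_det_pos {m : ℕ} {a b : ℝ} (w : Fin m → ℝ → ℝ)
    (hw : ∀ i, ContinuousOn (w i) (Set.Ioo a b))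
    (x : Fin (m + 1) → ℝ) (hx : StrictMono x) (hmem : ∀ j, x j ∈ Set.Ioo a b)
    (hpos : ∀ t : Fin m → ℝ, StrictMono t → (∀ j, t j ∈ Set.Ioo a b) →
      0 < (Matrix.of fun i j : Fin m => w i (t j)).det) :
    0 < (Matrix.of fun i j : Fin m =>
      ∫ y in (x j.castSucc)..(x j.succ), w i y).det := by
  set I : Fin m → Set ℝ := fun j => Set.Ioo (x j.castSucc) (x j.succ) with hI
  have hIlt : ∀ j : Fin m, x j.castSucc < x j.succ := fun j => hx (Fin.castSucc_lt_succ (i := j))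
  have hIsub : ∀ j : Fin m, Set.Icc (x j.castSucc) (x j.succ) ⊆ Set.Ioo a b := fun j y hy =>
    ⟨lt_of_lt_of_le (hmem _).1 hy.1, lt_of_le_of_lt hy.2 (hmem _).2⟩
  set box : Set (Fin m → ℝ) := Set.univ.pi I with hbox
  have hboxm : MeasurableSet box := MeasurableSet.univ_pi (fun j => measurableSet_Ioo)
  set K : Set (Fin m → ℝ) := Set.univ.pi fun j => Set.Icc (x j.castSucc) (x j.succ) with hK
  have hboxK : box ⊆ K := Set.pi_mono (fun j _ => Set.Ioo_subset_Icc_self)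
  have hKcomp : IsCompact K := isCompact_univ_pi (fun j => isCompact_Icc)
  have hKsub : ∀ t ∈ K, ∀ j, t j ∈ Set.Ioo a b := fun t ht j => hIsub j (ht j (Set.mem_univ j))
  have hcont : ∀ i j : Fin m, ContinuousOn (fun t : Fin m → ℝ => w i (t j)) K := fun i j =>
    (hw i).comp (continuous_apply j).continuousOn (fun t ht => hKsub t ht j)
  set F : (Fin m → ℝ) → ℝ := fun t => (Matrix.of fun i j => w i (t j)).det with hF
  set P : Equiv.Perm (Fin m) → (Fin m → ℝ) → ℝ := fun σ t => ∏ j, w (σ j) (t j) with hP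
  have hPcont : ∀ σ, ContinuousOn (P σ) K := fun σ =>
    continuousOn_finset_prod _ (fun j _ => hcont (σ j) j)
  have hPint : ∀ σ, IntegrableOn (P σ) box :=
    fun σ => ((hPcont σ).integrableOn_compact hKcomp).mono_set hboxK
  have hFP : ∀ t, F t = ∑ σ : Equiv.Perm (Fin m), ((Equiv.Perm.sign σ : ℤ) : ℝ) * P σ t :=
    fun t => Matrix.det_apply' _
  -- main identity
  have hdet_eq : (Matrix.of fun i j : Fin m =>
      ∫ y in (x j.castSucc)..(x j.succ), w i y).det = ∫ t in box, F t := by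
    rw [Matrix.det_apply']
    have h1 : ∀ σ : Equiv.Perm (Fin m),
        ∏ j, (∫ y in (x j.castSucc)..(x j.succ), w (σ j) y) = ∫ t in box, P σ t := by
      intro σ
      have e1 : ∀ j : Fin m, (∫ y in (x j.castSucc)..(x j.succ), w (σ j) y)
          = ∫ y, (I j).indicator (w (σ j)) y := by
        intro j
        rw [intervalIntegral.integral_of_le (hIlt j).le,
          MeasureTheory.integral_Ioc_eq_integral_Ioo,
          MeasureTheory.integral_indicator measurableSet_Ioo]
      rw [Finset.prod_congr rfl (fun j _ => e1 j),
        ← MeasureTheory.integral_fintype_prod_eq_prod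
          (f := fun j => (I j).indicator (w (σ j))),
        ← MeasureTheory.integral_indicator hboxm]
      congr 1
      ext t
      by_cases ht : t ∈ box
      · rw [Set.indicator_of_mem ht]
        exact Finset.prod_congr rfl fun j _ => Set.indicator_of_mem (ht j (Set.mem_univ j)) _
      · rw [Set.indicator_of_notMem ht]
        obtain ⟨j, hj⟩ : ∃ j, t j ∉ I j := by simpa [hbox, Set.mem_pi] using ht
        exact Finset.prod_eq_zero (Finset.mem_univ j) (Set.indicator_of_notMem hj _)
    calc ∑ σ : Equiv.Perm (Fin m), ((Equiv.Perm.sign σ : ℤ) : ℝ)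
          * ∏ j, (Matrix.of fun i j : Fin m => ∫ y in (x j.castSucc)..(x j.succ), w i y) (σ j) j
        = ∑ σ : Equiv.Perm (Fin m), ∫ t in box, ((Equiv.Perm.sign σ : ℤ) : ℝ) * P σ t := by
          refine Finset.sum_congr rfl (fun σ _ => ?_)
          rw [MeasureTheory.integral_const_mul]
          congr 1
          simpa using h1 σ
      _ = ∫ t in box, ∑ σ : Equiv.Perm (Fin m), ((Equiv.Perm.sign σ : ℤ) : ℝ) * P σ t :=
          (MeasureTheory.integral_finset_sum _ (fun σ _ => ((hPint σ).const_mul _))).symm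
      _ = ∫ t in box, F t := by
          refine MeasureTheory.setIntegral_congr_fun hboxm (fun t _ => ?_)
          rw [hFP]
  have hpos_on : ∀ t ∈ box, 0 < F t := by
    intro t ht
    have htmem : ∀ j, t j ∈ I j := fun j => ht j (Set.mem_univ j)
    have hmono : StrictMono t := by
      intro i j hij
      have h1 : t i < x i.succ := (htmem i).2
      have h2 : x j.castSucc < t j := (htmem j).1
      have h3 : x i.succ ≤ x j.castSucc := by
        refine hx.monotone ?_
        rw [Fin.le_def]
        simpa using hij
      linarith
    exact hpos t hmono (fun j => hIsub j ⟨(htmem j).1.le, (htmem j).2.le⟩)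
  have hFcont : ContinuousOn F K := by
    have : ContinuousOn (fun t => ∑ σ : Equiv.Perm (Fin m),
        ((Equiv.Perm.sign σ : ℤ) : ℝ) * P σ t) K :=
      continuousOn_finset_sum _ (fun σ _ => (continuousOn_const.mul (hPcont σ)))
    exact this.congr (fun t _ => hFP t)
  have hFint : IntegrableOn F box := (hFcont.integrableOn_compact hKcomp).mono_set hboxK
  have hvolbox : 0 < MeasureTheory.volume box := by
    rw [hbox, MeasureTheory.volume_pi_pi]
    simp only [hI, Real.volume_Ioo]
    rw [CanonicallyOrderedAdd.prod_pos]
    exact fun j _ => ENNReal.ofReal_pos.2 (sub_pos.2 (hIlt j))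
  rw [hdet_eq]
  refine (MeasureTheory.setIntegral_pos_iff_support_of_nonneg_ae ?_ hFint).2 ?_
  · filter_upwards [MeasureTheory.ae_restrict_mem hboxm] with t ht using (hpos_on t ht).le
  · exact lt_of_lt_of_le hvolbox
      (measure_mono (fun t ht => ⟨(hpos_on t ht).ne', ht⟩))

open MeasureTheory in
theorem key : ∀ (d : ℕ) (a b : ℝ), a < b → ∀ u : Fin d → ℝ → ℝ,
    (∀ i, ContDiffOn ℝ (d - 1 : ℕ) (u i) (Set.Ioo a b)) →
    (∀ t ∈ Set.Ioo a b, ∀ (k : ℕ) (hk : k ≤ d),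
      0 < (Matrix.of fun i j : Fin k =>
        iteratedDerivWithin j.1 (u (Fin.castLE hk i)) (Set.Ioo a b) t).det) →
    ∀ x : Fin d → ℝ, StrictMono x → (∀ j, x j ∈ Set.Ioo a b) →
    0 < (Matrix.of fun i j : Fin d => u i (x j)).det := by
  intro d
  induction d with
  | zero =>
    intro a b hab u hu hW x hx hxm
    simp [Matrix.det_isEmpty]
  | succ m IH =>
    intro a b hab u hu hW x hx hxm
    set s := Set.Ioo a b with hsdef
    have hsU : UniqueDiffOn ℝ s := uniqueDiffOn_Ioo a b
    have hsO : IsOpen s := isOpen_Ioo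
    have hum : ∀ i, ContDiffOn ℝ (m : ℕ) (u i) s := by simpa using hu
    have h0 : ∀ t ∈ s, 0 < u 0 t := by
      intro t ht
      have h := hW t ht 1 (by omega)
      have e : (Matrix.of fun i j : Fin 1 =>
          iteratedDerivWithin j.1 (u (Fin.castLE (by omega : 1 ≤ m+1) i)) s t).det = u 0 t := by
        rw [Matrix.det_fin_one]
        simp [iteratedDerivWithin_zero]
      rwa [e] at h
    set g : Fin m → ℝ → ℝ := fun i t => u i.succ t / u 0 t with hgdef
    have hg : ∀ i, ContDiffOn ℝ (m : ℕ) (g i) s :=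
      fun i => (hum i.succ).div (hum 0) (fun t ht => (h0 t ht).ne')
    set v : Fin m → ℝ → ℝ := fun i => derivWithin (g i) s with hvdef
    have hv : ∀ i : Fin m, ContDiffOn ℝ (m - 1 : ℕ) (v i) s := by
      intro i
      have hm : 1 ≤ m := i.pos
      refine (hg i).derivWithin hsU ?_
      norm_cast
      omega
    -- Wronskian condition for v
    have hWv : ∀ t ∈ s, ∀ (k : ℕ) (hk : k ≤ m),
        0 < (Matrix.of fun i j : Fin k =>
          iteratedDerivWithin j.1 (v (Fin.castLE hk i)) s t).det := by
      intro t ht k hk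
      have hk' : k + 1 ≤ m + 1 := by omega
      set H : Fin (k+1) → ℝ → ℝ :=
        Fin.cases (fun _ => (1:ℝ)) (fun i' => g (Fin.castLE hk i')) with hHdef
      have hH : ∀ i, ContDiffOn ℝ (m : ℕ) (H i) s := by
        intro i
        induction i using Fin.cases with
        | zero => simpa [hHdef] using (contDiffOn_const :
            ContDiffOn ℝ (m:ℕ) (fun _ : ℝ => (1:ℝ)) s)
        | succ i' => simpa [hHdef] using hg (Fin.castLE hk i')
      set A : Matrix (Fin (k+1)) (Fin (k+1)) ℝ :=
        Matrix.of fun i j => iteratedDerivWithin j.1 (H i) s t with hAdef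
      set T : Matrix (Fin (k+1)) (Fin (k+1)) ℝ :=
        Matrix.of fun r j => if (r:ℕ) ≤ (j:ℕ)
          then (j.1.choose r.1 : ℝ) * iteratedDerivWithin (j.1 - r.1) (u 0) s t
          else 0 with hTdef
      have hMAT : (Matrix.of fun i j : Fin (k+1) =>
          iteratedDerivWithin j.1 (u (Fin.castLE hk' i)) s t) = A * T := by
        ext i j
        have heq : Set.EqOn (u (Fin.castLE hk' i)) (fun y => H i y * u 0 y) s := by
          intro y hy
          induction i using Fin.cases with
          | zero => simp [hHdef]
          | succ i' =>
            have hc : Fin.castLE hk' i'.succ = (Fin.castLE hk i').succ := by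
              ext; simp
            rw [hc]
            simp only [hHdef, Fin.cases_succ, hgdef]
            exact (div_mul_cancel₀ _ (h0 y hy).ne').symm
        rw [Matrix.of_apply, iteratedDerivWithin_congr heq ht,
          my_leibniz hsU (H i) (u 0) j.1
            ((hH i).of_le (by exact_mod_cast (by omega : j.1 ≤ m)))
            ((hum 0).of_le (by exact_mod_cast (by omega : j.1 ≤ m))) t ht,
          Matrix.mul_apply]
        set f : ℕ → ℝ := fun rn => if rn ≤ (j:ℕ)
          then ((j:ℕ).choose rn : ℝ) * (iteratedDerivWithin rn (H i) s t
            * iteratedDerivWithin ((j:ℕ) - rn) (u 0) s t)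
          else 0 with hfdef
        have h2 : ∑ r : Fin (k+1), A i r * T r j = ∑ rn ∈ Finset.range (k+1), f rn := by
          rw [← Fin.sum_univ_eq_sum_range]
          refine Finset.sum_congr rfl (fun r _ => ?_)
          simp only [hAdef, hTdef, hfdef, Matrix.of_apply]
          by_cases hcase : (r:ℕ) ≤ (j:ℕ)
          · simp only [hcase, if_true]
            ring
          · simp [hcase]
        have h3 : ∑ rn ∈ Finset.range ((j:ℕ)+1), f rn = ∑ rn ∈ Finset.range (k+1), f rn := by
          refine Finset.sum_subset (Finset.range_subset_range.2 (by omega)) ?_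
          intro rn _ hrn
          have : ¬ rn ≤ (j:ℕ) := by
            simp only [Finset.mem_range] at hrn
            omega
          simp [hfdef, this]
        rw [h2, ← h3]
        refine Finset.sum_congr rfl (fun rn hrn => ?_)
        have : rn ≤ (j:ℕ) := by
          simp only [Finset.mem_range] at hrn
          omega
        simp [hfdef, this]
      have hTtri : T.BlockTriangular id := by
        intro i j hij
        have : (j:ℕ) < (i:ℕ) := hij
        simp only [hTdef, Matrix.of_apply]
        rw [if_neg (by omega)]
      have hTdet : T.det = (u 0 t)^(k+1) := by
        rw [Matrix.det_of_upperTriangular hTtri]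
        have hd : ∀ i : Fin (k+1), T i i = u 0 t := by
          intro i
          simp [hTdef, iteratedDerivWithin_zero]
        rw [Finset.prod_congr rfl (fun i _ => hd i)]
        simp
      have hMpos := hW t ht (k+1) hk'
      rw [hMAT, Matrix.det_mul, hTdet] at hMpos
      have hApos : 0 < A.det := by nlinarith [pow_pos (h0 t ht) (k+1)]
      have hrow : ∀ j : Fin (k+1), A 0 j = if j = (0 : Fin (k+1)) then 1 else 0 := by
        intro j
        by_cases hj : j = 0
        · subst hj
          simp [hAdef, hHdef, iteratedDerivWithin_zero]
        · rw [if_neg hj]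
          have hj1 : j.1 ≠ 0 := fun h => hj (Fin.ext h)
          simp only [hAdef, Matrix.of_apply]
          have : H 0 = fun _ => (1:ℝ) := by simp [hHdef]
          rw [this, iteratedDerivWithin_eq_iteratedFDerivWithin,
            iteratedFDerivWithin_const_of_ne hj1 _ s]
          rfl
      have hsub : A.submatrix Fin.succ Fin.succ = Matrix.of fun i j : Fin k =>
          iteratedDerivWithin j.1 (v (Fin.castLE hk i)) s t := by
        ext i j
        simp only [Matrix.submatrix_apply, hAdef, Matrix.of_apply]
        have hH' : H i.succ = g (Fin.castLE hk i) := by simp [hHdef]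
        rw [hH', Fin.val_succ, iteratedDerivWithin_succ']
      have hexp : A.det = (Matrix.of fun i j : Fin k =>
          iteratedDerivWithin j.1 (v (Fin.castLE hk i)) s t).det := by
        rw [Matrix.det_succ_row_zero, Finset.sum_eq_single (0 : Fin (k+1))]
        · rw [hrow 0, if_pos rfl, Fin.succAbove_zero, hsub]
          simp
        · intro j _ hj
          rw [hrow j, if_neg hj]
          ring
        · intro h
          exact absurd (Finset.mem_univ _) h
      rw [← hexp]
      exact hApos
    -- main part
    set H' : Fin (m+1) → ℝ → ℝ := Fin.cases (fun _ => (1:ℝ)) g with hH'def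
    set G : Matrix (Fin (m+1)) (Fin (m+1)) ℝ := Matrix.of fun i j => H' i (x j) with hGdef
    have hfact : (Matrix.of fun i j : Fin (m+1) => u i (x j))
        = Matrix.of fun i j => (fun j' : Fin (m+1) => u 0 (x j')) j * G i j := by
      ext i j
      induction i using Fin.cases with
      | zero => simp [hGdef, hH'def]
      | succ i' =>
        simp only [hGdef, hH'def, Matrix.of_apply, Fin.cases_succ, hgdef]
        field_simp [(h0 (x j) (hxm j)).ne']
    have hdet1 : (Matrix.of fun i j : Fin (m+1) => u i (x j)).det
        = (∏ j, u 0 (x j)) * G.det := by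
      rw [hfact, Matrix.det_mul_row]
    set A' : Matrix (Fin (m+1)) (Fin (m+1)) ℝ := Matrix.of fun i j =>
      Fin.cases (H' i (x 0)) (fun j' : Fin m => H' i (x j'.succ) - H' i (x j'.castSucc)) j
      with hA'def
    have hdet2 : G.det = A'.det := by
      refine Matrix.det_eq_of_forall_col_eq_smul_add_pred (fun _ => (1:ℝ)) ?_ ?_
      · intro i
        simp [hGdef, hA'def]
      · intro i j
        simp only [hGdef, hA'def, Matrix.of_apply, Fin.cases_succ]
        ring
    have hIccsub : ∀ j : Fin m, Set.Icc (x j.castSucc) (x j.succ) ⊆ s := by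
      intro j y hy
      exact ⟨lt_of_lt_of_le (hxm j.castSucc).1 hy.1, lt_of_le_of_lt hy.2 (hxm j.succ).2⟩
    have hFTC : ∀ (i : Fin m) (j : Fin m),
        g i (x j.succ) - g i (x j.castSucc)
          = ∫ y in (x j.castSucc)..(x j.succ), v i y := by
      intro i j
      have hm1 : (1:ℕ) ≤ m := i.pos
      have hgd : DifferentiableOn ℝ (g i) s :=
        (hg i).differentiableOn (by norm_cast; omega)
      have hc : ∀ y ∈ Set.uIcc (x j.castSucc) (x j.succ), HasDerivAt (g i) (v i y) y := by
        intro y hy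
        rw [Set.uIcc_of_le (hx (Fin.castSucc_lt_succ (i := j))).le] at hy
        have hys : y ∈ s := hIccsub j hy
        have hd : DifferentiableAt ℝ (g i) y := hgd.differentiableAt (hsO.mem_nhds hys)
        have hveq : v i y = deriv (g i) y := by
          simp only [hvdef]
          exact derivWithin_of_isOpen hsO hys
        rw [hveq]
        exact hd.hasDerivAt
      have hint : IntervalIntegrable (v i) MeasureTheory.volume (x j.castSucc) (x j.succ) := by
        apply ContinuousOn.intervalIntegrable
        refine ((hv i).continuousOn).mono ?_
        rw [Set.uIcc_of_le (hx (Fin.castSucc_lt_succ (i := j))).le]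
        exact hIccsub j
      rw [intervalIntegral.integral_eq_sub_of_hasDerivAt hc hint]
    have hdet3 : A'.det = (Matrix.of fun i j : Fin m =>
        ∫ y in (x j.castSucc)..(x j.succ), v i y).det := by
      have h00 : A' 0 0 = 1 := by simp [hA'def, hH'def]
      have hsub : A'.submatrix Fin.succ Fin.succ = Matrix.of fun i j : Fin m =>
          ∫ y in (x j.castSucc)..(x j.succ), v i y := by
        ext i j
        simp only [Matrix.submatrix_apply, hA'def, Matrix.of_apply, Fin.cases_succ, hH'def]
        exact hFTC i j
      rw [Matrix.det_succ_row_zero, Finset.sum_eq_single (0 : Fin (m+1))]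
      · rw [h00, Fin.succAbove_zero, hsub]
        simp
      · intro j _ hj
        have : A' 0 j = 0 := by
          rcases Fin.exists_succ_eq.2 hj with ⟨j', rfl⟩
          simp [hA'def, hH'def]
        rw [this]
        ring
      · intro h
        exact absurd (Finset.mem_univ _) h
    have hpos' : 0 < (Matrix.of fun i j : Fin m =>
        ∫ y in (x j.castSucc)..(x j.succ), v i y).det := by
      refine box_det_pos v (fun i => (hv i).continuousOn) x hx hxm ?_
      intro t ht htm
      exact IH a b hab v hv hWv t ht htm
    rw [hdet1, hdet2, hdet3]
    exact mul_pos (Finset.prod_pos (fun j _ => h0 (x j) (hxm j))) hpos'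

theorem stmt0 (n : ℕ) (a b : ℝ) (hab : a < b) (γ : ℝ → Fin (n + 1) → ℝ)
    (hγ : HasTotallyPositiveTorsion (n + 1) a b γ)
    (x : Fin (n + 1) → ℝ) (hx : StrictMono x)
    (hmem : ∀ j, x j ∈ Set.Ioo a b) :
    0 < (Matrix.of (fun i j : Fin (n + 1) =>
      derivWithin γ (Set.Ioo a b) (x j) i)).det := by
  obtain ⟨hcont, hsm, hWγ⟩ := hγ
  set s := Set.Ioo a b with hsdef
  have hsU : UniqueDiffOn ℝ s := uniqueDiffOn_Ioo a b
  set u : Fin (n+1) → ℝ → ℝ := fun i t => derivWithin γ s t i with hudef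
  have hdγ : ContDiffOn ℝ (n : ℕ) (derivWithin γ s) s := by
    refine hsm.derivWithin hsU ?_
    norm_cast
  have hu : ∀ i, ContDiffOn ℝ ((n+1) - 1 : ℕ) (u i) s := by
    intro i
    have h := (ContinuousLinearMap.proj (R := ℝ) (φ := fun _ : Fin (n+1) => ℝ)
      i).contDiff.comp_contDiffOn hdγ
    simpa [hudef, Function.comp_def, ContinuousLinearMap.proj_apply] using h
  have hcompeq : ∀ c : Fin (n+1), Set.EqOn (derivWithin (fun y => γ y c) s) (u c) s := by
    intro c y hy
    have e1 := my_pi_iter hsU γ hsm 1 (by omega) y hy c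
    rw [iteratedDerivWithin_one, iteratedDerivWithin_one] at e1
    exact e1.symm
  have hW : ∀ t ∈ s, ∀ (k : ℕ) (hk : k ≤ n+1),
      0 < (Matrix.of fun i j : Fin k =>
        iteratedDerivWithin j.1 (u (Fin.castLE hk i)) s t).det := by
    intro t ht k hk
    rcases Nat.eq_zero_or_pos k with rfl | hk1
    · simp [Matrix.det_isEmpty]
    · have h := hWγ t ht k hk hk1
      have e : (Matrix.of fun i j : Fin k =>
          iteratedDerivWithin (j.1+1) γ s t (Fin.castLE hk i))
          = Matrix.of fun i j : Fin k =>
            iteratedDerivWithin j.1 (u (Fin.castLE hk i)) s t := by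
        ext i j
        rw [Matrix.of_apply, Matrix.of_apply,
          my_pi_iter hsU γ hsm (j.1+1) (by omega) t ht (Fin.castLE hk i),
          iteratedDerivWithin_succ',
          iteratedDerivWithin_congr (hcompeq (Fin.castLE hk i)) ht]
      rwa [e] at h
  exact key (n+1) a b hab u hu hW x hx hmem

end
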